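/- Let X₁,…,Xₙ be commuting unitary d × d matrices with Xᵢ² = 1 for all i, and let Y be a unitary matrix with Y² = 1 that commutes with X₁,…,X_{n−1}. Then there exists a unitary matrix Z with Z² = 1 that commutes with all X₁,…,Xₙ and satisfies ‖Z − Y‖ ≤ (1 + 1/(2√2))·‖XₙY − YXₙ‖ in the normalized Hilbert–Schmidt norm. -/

import Mathlib

open Matrix

noncomputable def normHS {n : Type*} [Fintype n] (A : Matrix n n ℂ) : ℝ :=
  Real.sqrt ((Matrix.trace (Aᴴ * A)).re / Fintype.card n)

variable {n : Type*} [Fintype n] [DecidableEq n]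

lemma trace_re_eq (A : Matrix n n ℂ) :
    (Matrix.trace (Aᴴ * A)).re = ∑ i, ∑ j, ‖A j i‖ ^ 2 := by
  simp only [Matrix.trace, Matrix.mul_apply, Matrix.diag, Matrix.conjTranspose_apply,
    Complex.re_sum, Complex.mul_re, pow_two]
  congr 1; ext i; congr 1; ext j
  rw [← pow_two ‖A j i‖, Complex.sq_norm, Complex.normSq_apply]
  simp only [Complex.star_def, Complex.conj_re, Complex.conj_im]
  ring


attribute [local instance] Matrix.frobeniusSeminormedAddCommGroup Matrix.frobeniusNormedSpace

lemma normHS_eq_frobenius (A : Matrix n n ℂ) :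
    normHS A = ‖A‖ / Real.sqrt (Fintype.card n) := by
  rw [normHS, Matrix.frobenius_norm_def, trace_re_eq,
    show (∑ i, ∑ j, ‖A j i‖ ^ 2) = ∑ i, ∑ j, ‖A i j‖ ^ 2 from Finset.sum_comm (f := fun i j => ‖A j i‖ ^ 2),
    Real.sqrt_div (by positivity), Real.sqrt_eq_rpow]
  norm_num

lemma normHS_nonneg (A : Matrix n n ℂ) : 0 ≤ normHS A := Real.sqrt_nonneg _

lemma normHS_triangle (A B : Matrix n n ℂ) :
    normHS (A + B) ≤ normHS A + normHS B := by
  rw [normHS_eq_frobenius, normHS_eq_frobenius, normHS_eq_frobenius, ← add_div]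
  gcongr
  exact norm_add_le A B

lemma normHS_neg (A : Matrix n n ℂ) : normHS (-A) = normHS A := by
  rw [normHS_eq_frobenius, normHS_eq_frobenius, norm_neg]

lemma normHS_smul (c : ℂ) (A : Matrix n n ℂ) : normHS (c • A) = ‖c‖ * normHS A := by
  rw [normHS_eq_frobenius, normHS_eq_frobenius, norm_smul, mul_div_assoc]

lemma normHS_mul_left {W : Matrix n n ℂ} (h : Wᴴ * W = 1) (A : Matrix n n ℂ) :
    normHS (W * A) = normHS A := by
  unfold normHS
  rw [conjTranspose_mul, show Aᴴ * Wᴴ * (W * A) = Aᴴ * (Wᴴ * W) * A by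
    simp only [Matrix.mul_assoc], h, Matrix.mul_one]

lemma normHS_conj {U : Matrix n n ℂ} (h1 : Uᴴ * U = 1) (h2 : U * Uᴴ = 1) (A : Matrix n n ℂ) :
    normHS (U * A * Uᴴ) = normHS A := by
  unfold normHS
  congr 2
  rw [conjTranspose_mul, conjTranspose_mul, conjTranspose_conjTranspose]
  rw [show U * (Aᴴ * Uᴴ) * (U * A * Uᴴ) = U * (Aᴴ * (Uᴴ * U) * A) * Uᴴ by
    simp only [Matrix.mul_assoc], h1, Matrix.mul_one,
    Matrix.trace_mul_cycle, ← Matrix.mul_assoc, h1, Matrix.one_mul]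

lemma normHS_diagonal (v : n → ℂ) :
    normHS (diagonal v) = Real.sqrt ((∑ i, ‖v i‖ ^ 2) / Fintype.card n) := by
  unfold normHS
  rw [diagonal_conjTranspose, diagonal_mul_diagonal, trace_diagonal]
  congr 2
  rw [Complex.re_sum]
  congr 1; ext i
  rw [Complex.sq_norm, Complex.normSq_apply]
  simp only [Pi.star_apply, Pi.mul_apply, Complex.star_def, Complex.mul_re,
    Complex.conj_re, Complex.conj_im]
  ring

lemma commute_conj_diag {U B : Matrix n n ℂ} (hU1 : Uᴴ * U = 1) (hU2 : U * Uᴴ = 1)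
    (lam : n → ℝ) (g : ℝ → ℝ)
    (h : B * (U * diagonal (fun i => (lam i : ℂ)) * Uᴴ)
       = (U * diagonal (fun i => (lam i : ℂ)) * Uᴴ) * B) :
    B * (U * diagonal (fun i => (g (lam i) : ℂ)) * Uᴴ)
       = (U * diagonal (fun i => (g (lam i) : ℂ)) * Uᴴ) * B := by
  set B' := Uᴴ * B * U with hB'
  have hB : B = U * B' * Uᴴ := by
    rw [hB']
    calc B = (U * Uᴴ) * B * (U * Uᴴ) := by rw [hU2, Matrix.one_mul, Matrix.mul_one]
    _ = U * (Uᴴ * B * U) * Uᴴ := by simp only [Matrix.mul_assoc]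
  have hcomm : B' * diagonal (fun i => (lam i : ℂ)) = diagonal (fun i => (lam i : ℂ)) * B' := by
    have := congrArg (fun M => Uᴴ * M * U) h
    simpa only [hB', Matrix.mul_assoc, hU1, hU2, Matrix.mul_one, Matrix.one_mul,
      show ∀ C : Matrix n n ℂ, U * (Uᴴ * C) = C from fun C => by
        rw [← Matrix.mul_assoc, hU2, Matrix.one_mul],
      show ∀ C : Matrix n n ℂ, Uᴴ * (U * C) = C from fun C => by
        rw [← Matrix.mul_assoc, hU1, Matrix.one_mul]] using this
  have hcomm2 : B' * diagonal (fun i => (g (lam i) : ℂ))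
      = diagonal (fun i => (g (lam i) : ℂ)) * B' := by
    ext i j
    rw [Matrix.mul_diagonal, Matrix.diagonal_mul]
    by_cases hz : B' i j = 0
    · rw [hz, zero_mul, mul_zero]
    · have h1 : B' i j * (lam j : ℂ) = (lam i : ℂ) * B' i j := by
        have := congrFun (congrFun hcomm i) j
        simpa [Matrix.mul_diagonal, Matrix.diagonal_mul] using this
      have h2 : (lam j : ℂ) = (lam i : ℂ) := by
        rw [mul_comm ((lam i : ℂ))] at h1
        exact mul_left_cancel₀ hz h1
      have h3 : lam j = lam i := by exact_mod_cast h2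
      rw [h3, mul_comm]
  calc B * (U * diagonal (fun i => (g (lam i) : ℂ)) * Uᴴ)
      = U * (B' * diagonal (fun i => (g (lam i) : ℂ))) * Uᴴ := by
        rw [hB]; simp only [Matrix.mul_assoc]
        rw [show Uᴴ * (U * (diagonal (fun i => (g (lam i) : ℂ)) * Uᴴ))
            = diagonal (fun i => (g (lam i) : ℂ)) * Uᴴ from by
          rw [← Matrix.mul_assoc, hU1, Matrix.one_mul]]
    _ = U * (diagonal (fun i => (g (lam i) : ℂ)) * B') * Uᴴ := by rw [hcomm2]
    _ = (U * diagonal (fun i => (g (lam i) : ℂ)) * Uᴴ) * B := by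
        rw [hB]; simp only [Matrix.mul_assoc]
        rw [show Uᴴ * (U * (B' * Uᴴ)) = B' * Uᴴ from by
          rw [← Matrix.mul_assoc, hU1, Matrix.one_mul]]

theorem stmt_3 (d n : ℕ) (hn : 0 < n) (X : Fin n → Matrix (Fin d) (Fin d) ℂ)
    (hXu : ∀ i, X i ∈ Matrix.unitaryGroup (Fin d) ℂ)
    (hXc : ∀ i j, Commute (X i) (X j))
    (hXi : ∀ i, X i ^ 2 = 1)
    (Y : Matrix (Fin d) (Fin d) ℂ)
    (hYu : Y ∈ Matrix.unitaryGroup (Fin d) ℂ) (hYi : Y ^ 2 = 1)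
    (hYc : ∀ i : Fin n, (i : ℕ) < n - 1 → Commute Y (X i)) :
    ∃ Z : Matrix (Fin d) (Fin d) ℂ, Z ∈ Matrix.unitaryGroup (Fin d) ℂ ∧
      Z ^ 2 = 1 ∧ (∀ i, Commute Z (X i)) ∧
      normHS (Z - Y) ≤ (1 + 1 / (2 * Real.sqrt 2)) *
        normHS (X ⟨n - 1, Nat.sub_lt hn one_pos⟩ * Y - Y * X ⟨n - 1, Nat.sub_lt hn one_pos⟩) := by
  set k : Fin n := ⟨n - 1, Nat.sub_lt hn one_pos⟩ with hk
  set A := X k with hAdef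
  have hXh : ∀ i, (X i)ᴴ = X i := by
    intro i
    have h1 : (X i)ᴴ * X i = 1 := by
      rw [← Matrix.star_eq_conjTranspose]; exact (hXu i).1
    have h2 : X i * X i = 1 := by rw [← pow_two]; exact hXi i
    calc (X i)ᴴ = (X i)ᴴ * (X i * X i) := by rw [h2, Matrix.mul_one]
      _ = ((X i)ᴴ * X i) * X i := by rw [Matrix.mul_assoc]
      _ = X i := by rw [h1, Matrix.one_mul]
  have hYh : Yᴴ = Y := by
    have h1 : Yᴴ * Y = 1 := by
      rw [← Matrix.star_eq_conjTranspose]; exact hYu.1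
    have h2 : Y * Y = 1 := by rw [← pow_two]; exact hYi
    calc Yᴴ = Yᴴ * (Y * Y) := by rw [h2, Matrix.mul_one]
      _ = (Yᴴ * Y) * Y := by rw [Matrix.mul_assoc]
      _ = Y := by rw [h1, Matrix.one_mul]
  have hAh : Aᴴ = A := hXh k
  have hAA : A * A = 1 := by rw [← pow_two]; exact hXi k
  have hYY : Y * Y = 1 := by rw [← pow_two]; exact hYi
  have auxA : ∀ C : Matrix (Fin d) (Fin d) ℂ, A * (A * C) = C := fun C => by
    rw [← Matrix.mul_assoc, hAA, Matrix.one_mul]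
  have auxY : ∀ C : Matrix (Fin d) (Fin d) ℂ, Y * (Y * C) = C := fun C => by
    rw [← Matrix.mul_assoc, hYY, Matrix.one_mul]
  set E := A * Y - Y * A with hE
  set Y' := (2⁻¹ : ℂ) • (Y + A * Y * A) with hY'
  have hY'herm : Y'.IsHermitian := by
    show Y'ᴴ = Y'
    rw [hY']
    simp only [conjTranspose_smul, conjTranspose_add, conjTranspose_mul, hAh, hYh]
    rw [show star (2⁻¹ : ℂ) = 2⁻¹ by norm_num [Complex.star_def], Matrix.mul_assoc]
  set U : Matrix (Fin d) (Fin d) ℂ := (hY'herm.eigenvectorUnitary : Matrix (Fin d) (Fin d) ℂ) with hU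
  set lam : Fin d → ℝ := hY'herm.eigenvalues with hlam
  have hU1 : Uᴴ * U = 1 := by
    rw [← Matrix.star_eq_conjTranspose]; exact Unitary.coe_star_mul_self _
  have hU2 : U * Uᴴ = 1 := by
    rw [← Matrix.star_eq_conjTranspose]; exact Unitary.coe_mul_star_self _
  have auxU1 : ∀ C : Matrix (Fin d) (Fin d) ℂ, Uᴴ * (U * C) = C := fun C => by
    rw [← Matrix.mul_assoc, hU1, Matrix.one_mul]
  have auxU2 : ∀ C : Matrix (Fin d) (Fin d) ℂ, U * (Uᴴ * C) = C := fun C => by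
    rw [← Matrix.mul_assoc, hU2, Matrix.one_mul]
  set D : Matrix (Fin d) (Fin d) ℂ := diagonal (fun i => ((lam i : ℝ) : ℂ)) with hD
  have hspec : Y' = U * D * Uᴴ := hY'herm.spectral_theorem
  set g : ℝ → ℝ := fun t => if 0 ≤ t then 1 else -1 with hg
  set G : Matrix (Fin d) (Fin d) ℂ := diagonal (fun i => ((g (lam i) : ℝ) : ℂ)) with hG
  set Z := U * G * Uᴴ with hZ
  have hGh : Gᴴ = G := by
    rw [hG, diagonal_conjTranspose,
      show (star fun i => ((g (lam i) : ℝ) : ℂ)) = fun i => ((g (lam i) : ℝ) : ℂ) from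
        funext fun i => Complex.conj_ofReal _]
  have hgg : ∀ t, g t * g t = 1 := by
    intro t; rw [hg]; dsimp only; split <;> norm_num
  have hGG : G * G = 1 := by
    rw [hG, diagonal_mul_diagonal]
    have he : (fun i => ((g (lam i) : ℝ) : ℂ) * ((g (lam i) : ℝ) : ℂ)) = fun _ => (1 : ℂ) := by
      funext i
      rw [show ((g (lam i) : ℝ) : ℂ) * ((g (lam i) : ℝ) : ℂ) = ((g (lam i) * g (lam i) : ℝ) : ℂ)
        from by push_cast; ring, hgg]
      norm_num
    rw [he, diagonal_one]
  have hZZ : Z * Z = 1 := by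
    rw [hZ]
    calc U * G * Uᴴ * (U * G * Uᴴ) = U * (G * (Uᴴ * (U * (G * Uᴴ)))) := by
          simp only [Matrix.mul_assoc]
      _ = U * (G * G * Uᴴ) := by rw [auxU1]; simp only [Matrix.mul_assoc]
      _ = 1 := by rw [hGG, Matrix.one_mul, hU2]
  have hZh : Zᴴ = Z := by
    rw [hZ, conjTranspose_mul, conjTranspose_mul, conjTranspose_conjTranspose, hGh,
      Matrix.mul_assoc]
  refine ⟨Z, ?_, ?_, ?_, ?_⟩
  · rw [Matrix.mem_unitaryGroup_iff, Matrix.star_eq_conjTranspose, hZh]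
    exact hZZ
  · rw [pow_two]; exact hZZ
  · intro i
    have hYcomm : X i * Y' = Y' * X i := by
      rw [hY', mul_smul_comm, smul_mul_assoc]
      congr 1
      by_cases hik : i = k
      · subst hik
        rw [← hAdef]
        simp only [Matrix.mul_add, Matrix.add_mul, Matrix.mul_assoc, auxA, hAA, Matrix.mul_one]
        exact add_comm _ _
      · have hlt : (i : ℕ) < n - 1 := by
          have h1 := i.isLt
          have h2 : (i : ℕ) ≠ n - 1 := fun h => hik (Fin.ext h)
          omega
        have c1 : Commute (X i) Y := (hYc i hlt).symm
        have c2 : Commute (X i) A := hXc i k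
        exact c1.add_right ((c2.mul_right c1).mul_right c2)
    have hyp : X i * (U * diagonal (fun j => ((lam j : ℝ) : ℂ)) * Uᴴ)
        = (U * diagonal (fun j => ((lam j : ℝ) : ℂ)) * Uᴴ) * X i := by
      rw [← hD, ← hspec]; exact hYcomm
    show Z * X i = X i * Z
    rw [hZ, hG]
    exact (commute_conj_diag hU1 hU2 lam g hyp).symm
  · have hEh : Eᴴ = -E := by
      rw [hE, conjTranspose_sub, conjTranspose_mul, conjTranspose_mul, hAh, hYh, neg_sub]
    have hkey : Eᴴ * E = (4 : ℂ) • (1 - Y' * Y') := by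
      rw [hEh, hE, hY']
      simp only [Matrix.sub_mul, Matrix.mul_sub, Matrix.add_mul, Matrix.mul_add, neg_sub,
        smul_mul_assoc, mul_smul_comm, smul_smul, Matrix.mul_assoc, auxA, auxY, hAA, hYY,
        Matrix.mul_one]
      module
    have htrD2 : Matrix.trace (D * D) = ((∑ i, (lam i) ^ 2 : ℝ) : ℂ) := by
      rw [hD, diagonal_mul_diagonal, Matrix.trace_diagonal]
      push_cast
      exact Finset.sum_congr rfl fun i _ => by ring
    have htrY'2 : Matrix.trace (Y' * Y') = ((∑ i, (lam i) ^ 2 : ℝ) : ℂ) := by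
      have hYY2 : Y' * Y' = U * (D * D) * Uᴴ := by
        rw [hspec]; simp only [Matrix.mul_assoc, auxU1]
      rw [hYY2, Matrix.trace_mul_cycle, ← Matrix.mul_assoc, hU1, Matrix.one_mul, htrD2]
    have htrE : (Matrix.trace (Eᴴ * E)).re = 4 * (∑ i, (1 - lam i ^ 2)) := by
      rw [hkey, Matrix.trace_smul, Matrix.trace_sub, Matrix.trace_one, htrY'2, smul_eq_mul]
      rw [show ((4 : ℂ) * ((Fintype.card (Fin d) : ℂ) - ((∑ i, (lam i) ^ 2 : ℝ) : ℂ)))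
          = (((4 * ((Fintype.card (Fin d) : ℝ) - ∑ i, (lam i) ^ 2)) : ℝ) : ℂ) from by
        push_cast; ring, Complex.ofReal_re, Finset.sum_sub_distrib, Finset.sum_const,
        Finset.card_univ]
      simp
    have hlam2 : ∀ i, lam i ^ 2 ≤ 1 := by
      intro i
      have hM : Uᴴ * (Eᴴ * E) * U = (4 : ℂ) • (1 - D * D) := by
        rw [hkey, hspec]
        simp only [smul_mul_assoc, mul_smul_comm, Matrix.mul_sub, Matrix.sub_mul,
          Matrix.mul_one, Matrix.one_mul, Matrix.mul_assoc, auxU1, auxU2, hU1]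
      have hM2 : (E * U)ᴴ * (E * U) = (4 : ℂ) • (1 - D * D) := by
        rw [conjTranspose_mul, show Uᴴ * Eᴴ * (E * U) = Uᴴ * (Eᴴ * E) * U from by
          simp only [Matrix.mul_assoc], hM]
      have hdiag := congrArg Complex.re (congrFun (congrFun hM2 i) i)
      rw [Matrix.mul_apply, Complex.re_sum] at hdiag
      have hL : ∀ j, (((E * U)ᴴ) i j * (E * U) j i).re = ‖(E * U) j i‖ ^ 2 := by
        intro j
        rw [Matrix.conjTranspose_apply, Complex.sq_norm,
          Complex.normSq_apply, Complex.mul_re]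
        simp only [Complex.star_def, Complex.conj_re, Complex.conj_im]
        ring
      rw [Finset.sum_congr rfl fun j _ => hL j] at hdiag
      have hR : (((4 : ℂ) • ((1 : Matrix (Fin d) (Fin d) ℂ) - D * D)) i i).re
          = 4 * (1 - lam i ^ 2) := by
        rw [hD, diagonal_mul_diagonal]
        simp only [Matrix.smul_apply, Matrix.sub_apply, Matrix.one_apply_eq,
          Matrix.diagonal_apply_eq, smul_eq_mul]
        rw [show ((4 : ℂ) * (1 - ((lam i : ℝ) : ℂ) * ((lam i : ℝ) : ℂ)))
            = (((4 * (1 - lam i ^ 2)) : ℝ) : ℂ) from by push_cast; ring, Complex.ofReal_re]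
      rw [hR] at hdiag
      have hnn : 0 ≤ ∑ j, ‖(E * U) j i‖ ^ 2 :=
        Finset.sum_nonneg fun j _ => by positivity
      nlinarith
    have hnormE : normHS E
        = 2 * Real.sqrt ((∑ i, (1 - lam i ^ 2)) / (Fintype.card (Fin d))) := by
      rw [show normHS E = Real.sqrt ((Matrix.trace (Eᴴ * E)).re / (Fintype.card (Fin d)))
        from rfl, htrE, mul_div_assoc, show (4 : ℝ) = 2 ^ 2 by norm_num,
        Real.sqrt_mul (by positivity), Real.sqrt_sq (by norm_num)]
    have hZY' : Z - Y'
        = U * diagonal (fun i => ((g (lam i) : ℝ) : ℂ) - ((lam i : ℝ) : ℂ)) * Uᴴ := by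
      rw [hZ, hspec, hG, hD, ← Matrix.sub_mul, ← Matrix.mul_sub, diagonal_sub]
    have hptle : ∀ i, ‖((g (lam i) : ℝ) : ℂ) - ((lam i : ℝ) : ℂ)‖ ^ 2 ≤ 1 - lam i ^ 2 := by
      intro i
      rw [show ((g (lam i) : ℝ) : ℂ) - ((lam i : ℝ) : ℂ) = ((g (lam i) - lam i : ℝ) : ℂ) from by
        push_cast; ring, Complex.norm_real, Real.norm_eq_abs, sq_abs]
      have h2 := hlam2 i
      rw [hg]; dsimp only
      split <;> nlinarith
    have hle1 : normHS (Z - Y')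
        ≤ Real.sqrt ((∑ i, (1 - lam i ^ 2)) / (Fintype.card (Fin d))) := by
      rw [hZY', normHS_conj hU1 hU2, normHS_diagonal]
      apply Real.sqrt_le_sqrt
      rw [div_eq_mul_inv, div_eq_mul_inv]
      exact mul_le_mul_of_nonneg_right (Finset.sum_le_sum fun i _ => hptle i) (by positivity)
    have hYsubY' : Y - Y' = (2⁻¹ : ℂ) • (A * E) := by
      rw [hE, hY', Matrix.mul_sub, ← Matrix.mul_assoc A A Y, hAA, Matrix.one_mul,
        Matrix.mul_assoc A Y A]
      module
    have hnormYY' : normHS (Y - Y') = 2⁻¹ * normHS E := by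
      rw [hYsubY', normHS_smul, normHS_mul_left (by rw [hAh]; exact hAA)]
      norm_num
    calc normHS (Z - Y) = normHS ((Z - Y') + (Y' - Y)) := by rw [sub_add_sub_cancel]
      _ ≤ normHS (Z - Y') + normHS (Y' - Y) := normHS_triangle _ _
      _ = normHS (Z - Y') + normHS (Y - Y') := by rw [← normHS_neg (Y - Y'), neg_sub]
      _ ≤ Real.sqrt ((∑ i, (1 - lam i ^ 2)) / (Fintype.card (Fin d))) + 2⁻¹ * normHS E :=
          add_le_add hle1 (le_of_eq hnormYY')
      _ = normHS E := by rw [hnormE]; ring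
      _ ≤ (1 + 1 / (2 * Real.sqrt 2)) * normHS E := by
          have ht : (0 : ℝ) ≤ 1 / (2 * Real.sqrt 2) := by positivity
          nlinarith [normHS_nonneg E]
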